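/- Under the hypotheses of the sufficient-decrease lemma (for each i: ∇f_i is L_i-Lipschitz; ∇f_i(U_i) = −Y_i; U_i⁺ globally minimizes the μ_i-strongly convex local subproblem g_i(U) = f_i(U) + ⟨Y_i, U − Z⟩ + (ρ_i/2)‖U − Z‖²; Z⁺ globally minimizes Z' ↦ 𝓛({U_i⁺}, Z', {Y_i}); ∇f_i(U_i⁺) + Y_i + ρ_i(U_i⁺ − Z⁺) = 0; and Y_i⁺ = Y_i + ρ_i(U_i⁺ − Z⁺)), if additionally the penalty parameters satisfy ρ_i μ_i ≥ 2 L_i² for every i, then the augmented Lagrangian does not increase: 𝓛({U_i⁺}, Z⁺, {Y_i⁺}) ≤ 𝓛({U_i}, Z, {Y_i}). -/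

import Mathlib

open scoped RealInnerProductSpace

/-- The augmented Lagrangian of the FedPCA consensus problem. -/
noncomputable def augLag {E : Type*} [NormedAddCommGroup E] [InnerProductSpace ℝ E]
    (N : ℕ) (f : Fin N → E → ℝ) (ρ : Fin N → ℝ)
    (U : Fin N → E) (Z : E) (Y : Fin N → E) : ℝ :=
  (∑ i, f i (U i)) + (∑ i, ⟪Y i, U i - Z⟫) + (∑ i, ρ i / 2 * ‖U i - Z‖ ^ 2)

/-- A global minimizer of a `μ`-strongly convex function satisfies the
quadratic growth bound `h x + μ/2 ‖y - x‖² ≤ h y`. -/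
lemma strong_min_aux {E : Type*} [NormedAddCommGroup E] [InnerProductSpace ℝ E]
    (h : E → ℝ) (μ : ℝ) (hμ : 0 < μ)
    (hconv : ConvexOn ℝ Set.univ (fun v => h v - μ / 2 * ‖v‖ ^ 2))
    (x : E) (hmin : ∀ y, h x ≤ h y) (y : E) :
    h x + μ / 2 * ‖y - x‖ ^ 2 ≤ h y := by
  have key : ∀ t : ℝ, t ∈ Set.Ioo (0:ℝ) 1 →
      h x + μ / 2 * (1 - t) * ‖y - x‖ ^ 2 ≤ h y := by
    intro t ht
    have h1 : (0:ℝ) ≤ 1 - t := by linarith [ht.2]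
    have h2 : (0:ℝ) ≤ t := le_of_lt ht.1
    have hab : (1 - t) + t = 1 := by ring
    have hc := hconv.2 (Set.mem_univ x) (Set.mem_univ y) h1 h2 hab
    simp only [smul_eq_mul] at hc
    -- norm identity for convex combinations
    have hid : ‖(1-t) • x + t • y‖ ^ 2
        = (1-t)*‖x‖^2 + t*‖y‖^2 - t*(1-t)*‖y - x‖^2 := by
      have e1 : ‖(1-t) • x + t • y‖ ^ 2
          = ‖(1-t) • x‖^2 + 2 * ⟪(1-t) • x, t • y⟫ + ‖t • y‖^2 :=
        norm_add_sq_real _ _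
      have e2 : ‖y - x‖ ^ 2 = ‖y‖^2 - 2 * ⟪y, x⟫ + ‖x‖^2 := norm_sub_sq_real _ _
      rw [e1, e2, norm_smul, norm_smul, real_inner_smul_left, real_inner_smul_right,
        Real.norm_eq_abs, Real.norm_eq_abs, abs_of_nonneg h1, abs_of_nonneg h2,
        real_inner_comm x y]
      ring
    have hm := hmin ((1-t) • x + t • y)
    rw [hid] at hc
    -- from hm and hc : t * (h x + μ/2 (1-t) ‖y-x‖²) ≤ t * h y, with t > 0
    nlinarith [ht.1, sq_nonneg ‖y - x‖]
  have hten : Filter.Tendsto (fun t : ℝ => h x + μ / 2 * (1 - t) * ‖y - x‖ ^ 2)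
      (nhdsWithin 0 (Set.Ioi 0)) (nhds (h x + μ / 2 * (1 - 0) * ‖y - x‖ ^ 2)) := by
    apply Filter.Tendsto.mono_left _ nhdsWithin_le_nhds
    exact Continuous.tendsto (by continuity) 0
  have : h x + μ / 2 * (1 - 0) * ‖y - x‖ ^ 2 ≤ h y := by
    refine le_of_tendsto hten ?_
    filter_upwards [Ioo_mem_nhdsGT_of_mem (by norm_num : (0:ℝ) ∈ Set.Ico (0:ℝ) 1)]
      with t ht using key t ht
  linarith [this]

/-- Monotone-decrease condition in Lemma 2: under the sufficient-decrease
hypotheses, if moreover `ρᵢ μᵢ ≥ 2Lᵢ²` for every `i`, then the augmented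
Lagrangian does not increase: `𝓛({Uᵢ⁺}, Z⁺, {Yᵢ⁺}) ≤ 𝓛({Uᵢ}, Z, {Yᵢ})`. -/
theorem stmt_5 {E : Type*} [NormedAddCommGroup E] [InnerProductSpace ℝ E] [CompleteSpace E]
    (N : ℕ) (hN : 1 ≤ N)
    (f : Fin N → E → ℝ) (f' : Fin N → E → E)
    (L ρ μ : Fin N → ℝ) (hL : ∀ i, 0 ≤ L i) (hρ : ∀ i, 0 < ρ i) (hμ : ∀ i, 0 < μ i)
    (hdiff : ∀ i x, HasGradientAt (f i) (f' i x) x)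
    (hlip : ∀ i x y, ‖f' i x - f' i y‖ ≤ L i * ‖x - y‖)
    (U Up : Fin N → E) (Z Zp : E) (Y Yp : Fin N → E)
    (hprev : ∀ i, f' i (U i) = -(Y i))
    (hsc : ∀ i, ConvexOn ℝ Set.univ
      (fun V => (f i V + ⟪Y i, V - Z⟫ + ρ i / 2 * ‖V - Z‖ ^ 2) - μ i / 2 * ‖V‖ ^ 2))
    (hUmin : ∀ i (V : E),
      f i (Up i) + ⟪Y i, Up i - Z⟫ + ρ i / 2 * ‖Up i - Z‖ ^ 2 ≤
        f i V + ⟪Y i, V - Z⟫ + ρ i / 2 * ‖V - Z‖ ^ 2)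
    (hZmin : ∀ Z' : E, augLag N f ρ Up Zp Y ≤ augLag N f ρ Up Z' Y)
    (hopt : ∀ i, f' i (Up i) + Y i + ρ i • (Up i - Zp) = 0)
    (hdual : ∀ i, Yp i = Y i + ρ i • (Up i - Zp))
    (hcond : ∀ i, 2 * (L i) ^ 2 ≤ ρ i * μ i) :
    augLag N f ρ Up Zp Yp ≤ augLag N f ρ U Z Y := by
  -- Step 1: per-client bound on the dual-ascent term.
  have step1 : ∀ i, ⟪Yp i - Y i, Up i - Zp⟫ ≤ μ i / 2 * ‖Up i - U i‖ ^ 2 := by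
    intro i
    have hY : Yp i - Y i = ρ i • (Up i - Zp) := by rw [hdual i]; abel
    have h1' : Y i = -(f' i (U i)) := by rw [hprev i, neg_neg]
    have hw : ρ i • (Up i - Zp) = f' i (U i) - f' i (Up i) := by
      have h2 : ρ i • (Up i - Zp) = -(f' i (Up i) + Y i) :=
        eq_neg_of_add_eq_zero_right (hopt i)
      rw [h2, h1']; abel
    have hnorm : ρ i * ‖Up i - Zp‖ ≤ L i * ‖Up i - U i‖ := by
      have e : ‖ρ i • (Up i - Zp)‖ = ρ i * ‖Up i - Zp‖ := by
        rw [norm_smul, Real.norm_eq_abs, abs_of_pos (hρ i)]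
      rw [← e, hw]
      calc ‖f' i (U i) - f' i (Up i)‖ ≤ L i * ‖U i - Up i‖ := hlip i _ _
        _ = L i * ‖Up i - U i‖ := by rw [norm_sub_rev]
    have hip : ⟪Yp i - Y i, Up i - Zp⟫ = ρ i * ‖Up i - Zp‖ ^ 2 := by
      rw [hY, real_inner_smul_left, real_inner_self_eq_norm_sq]
    rw [hip]
    nlinarith [norm_nonneg (Up i - Zp), norm_nonneg (Up i - U i), hρ i, hL i,
      hcond i, hμ i, sq_nonneg (‖Up i - U i‖),
      mul_le_mul hnorm hnorm
        (mul_nonneg (le_of_lt (hρ i)) (norm_nonneg (Up i - Zp)))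
        (mul_nonneg (hL i) (norm_nonneg (Up i - U i)))]
  -- Step A: changing the multipliers costs at most ∑ μᵢ/2 ‖Upᵢ - Uᵢ‖².
  have sum1 : augLag N f ρ Up Zp Yp ≤
      augLag N f ρ Up Zp Y + ∑ i, μ i / 2 * ‖Up i - U i‖ ^ 2 := by
    unfold augLag
    have hterm : ∀ i : Fin N, ⟪Yp i, Up i - Zp⟫ ≤
        ⟪Y i, Up i - Zp⟫ + μ i / 2 * ‖Up i - U i‖ ^ 2 := by
      intro i
      have := step1 i
      rw [inner_sub_left] at this
      linarith
    have hsum : (∑ i, ⟪Yp i, Up i - Zp⟫) ≤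
        ∑ i, (⟪Y i, Up i - Zp⟫ + μ i / 2 * ‖Up i - U i‖ ^ 2) :=
      Finset.sum_le_sum fun i _ => hterm i
    rw [Finset.sum_add_distrib] at hsum
    linarith
  -- Step C: strong convexity of the local subproblems.
  have sumC : augLag N f ρ Up Z Y + ∑ i, μ i / 2 * ‖Up i - U i‖ ^ 2 ≤
      augLag N f ρ U Z Y := by
    unfold augLag
    have per : ∀ i : Fin N,
        (f i (Up i) + ⟪Y i, Up i - Z⟫ + ρ i / 2 * ‖Up i - Z‖ ^ 2)
          + μ i / 2 * ‖Up i - U i‖ ^ 2 ≤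
        f i (U i) + ⟪Y i, U i - Z⟫ + ρ i / 2 * ‖U i - Z‖ ^ 2 := by
      intro i
      have hmin : ∀ V : E,
          (fun V => f i V + ⟪Y i, V - Z⟫ + ρ i / 2 * ‖V - Z‖ ^ 2) (Up i) ≤
          (fun V => f i V + ⟪Y i, V - Z⟫ + ρ i / 2 * ‖V - Z‖ ^ 2) V := hUmin i
      have := strong_min_aux
        (fun V => f i V + ⟪Y i, V - Z⟫ + ρ i / 2 * ‖V - Z‖ ^ 2) (μ i) (hμ i)
        (hsc i) (Up i) hmin (U i)
      rw [norm_sub_rev (U i) (Up i)] at this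
      linarith
    have hsum := Finset.sum_le_sum fun (i : Fin N) (_ : i ∈ Finset.univ) => per i
    simp only [Finset.sum_add_distrib] at hsum
    linarith
  calc augLag N f ρ Up Zp Yp
      ≤ augLag N f ρ Up Zp Y + ∑ i, μ i / 2 * ‖Up i - U i‖ ^ 2 := sum1
    _ ≤ augLag N f ρ Up Z Y + ∑ i, μ i / 2 * ‖Up i - U i‖ ^ 2 := by
        linarith [hZmin Z]
    _ ≤ augLag N f ρ U Z Y := sumC
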